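/- Let G be a finite simple undirected graph, let v be a vertex of G, and let H_v be the auxiliary graph of v. Suppose u ∈ N1 has degree exactly 1 in H_v, with unique H_v-neighbour w, and suppose S is a modulator of G with v ∉ S and u ∈ S. Then (S \ {u}) ∪ {w} is also a modulator of G, and its cardinality is at most |S|. -/

import Mathlib

variable {V : Type*}

/-- The graph obtained from `G` by deleting the vertex set `S`
(deleted vertices become isolated, which does not affect cluster-ness of the rest). -/
def SimpleGraph.deleteSet (G : SimpleGraph V) (S : Set V) : SimpleGraph V where
  Adj a b := G.Adj a b ∧ a ∉ S ∧ b ∉ S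
  symm := by
    constructor
    intro a b h
    exact ⟨h.1.symm, h.2.2, h.2.1⟩
  loopless := by
    constructor
    intro a h
    exact G.loopless.irrefl a h.1

/-- `(u, v, w)` is a `P₃` in `G`: an induced path on the three distinct vertices
`u`, `v`, `w` with edges `uv` and `vw` and non-edge `uw`. -/
def IsP3 (G : SimpleGraph V) (u v w : V) : Prop :=
  G.Adj u v ∧ G.Adj v w ∧ ¬ G.Adj u w ∧ u ≠ w

/-- A cluster graph is a graph containing no `P₃`. -/
def IsClusterGraph (G : SimpleGraph V) : Prop :=
  ∀ u v w : V, ¬ IsP3 G u v w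

/-- `S` is a modulator of `G`: deleting `S` from `G` yields a cluster graph. -/
def IsModulator (G : SimpleGraph V) (S : Set V) : Prop :=
  IsClusterGraph (G.deleteSet S)

/-- A solution is a modulator of minimum cardinality. -/
def IsSolution (G : SimpleGraph V) (S : Set V) : Prop :=
  IsModulator G S ∧ ∀ T : Set V, IsModulator G T → S.ncard ≤ T.ncard

/-- `N1 G v` is the neighbourhood of `v` in `G`. -/
def N1 (G : SimpleGraph V) (v : V) : Set V := G.neighborSet v

/-- `N2 G v = N_G(N_G[v])` is the set of vertices at distance exactly `2` from `v`. -/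
def N2 (G : SimpleGraph V) (v : V) : Set V :=
  {w | w ≠ v ∧ ¬ G.Adj v w ∧ ∃ u, G.Adj v u ∧ G.Adj u w}

/-- Adjacency in the auxiliary graph `H_v`: non-edges of `G` inside `N1`,
and edges of `G` between `N1` and `N2`. -/
def HvAdj (G : SimpleGraph V) (v a b : V) : Prop :=
  (a ∈ N1 G v ∧ b ∈ N1 G v ∧ a ≠ b ∧ ¬ G.Adj a b) ∨
  (a ∈ N1 G v ∧ b ∈ N2 G v ∧ G.Adj a b) ∨
  (b ∈ N1 G v ∧ a ∈ N2 G v ∧ G.Adj a b)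

/-- `X` is a vertex cover of the auxiliary graph `H_v`: a subset of
`V(H_v) = N1 ∪ N2` meeting every edge of `H_v`. -/
def IsVCHv (G : SimpleGraph V) (v : V) (X : Set V) : Prop :=
  X ⊆ N1 G v ∪ N2 G v ∧ ∀ a b : V, HvAdj G v a b → a ∈ X ∨ b ∈ X

/-- `X` is a vertex cover of the graph `H`. -/
def IsVC (H : SimpleGraph V) (X : Set V) : Prop :=
  ∀ a b : V, H.Adj a b → a ∈ X ∨ b ∈ X

/-- The connected component of `v` in `G` is a clique. -/
def ComponentIsClique (G : SimpleGraph V) (v : V) : Prop :=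
  ∀ u w : V, G.Reachable v u → G.Reachable v w → u ≠ w → G.Adj u w

/-- The auxiliary graph `H_v` is an `s`-skein with seagulls `(x i, y i, z i)`:
it is the disjoint union of `s` seagulls (paths on three vertices with middle
vertex `y i ∈ N1` and endpoints `x i, z i ∈ N2`) and isolated vertices. -/
def IsSkein (G : SimpleGraph V) (v : V) (s : ℕ) (x y z : Fin s → V) : Prop :=
  (∀ i, x i ∈ N2 G v ∧ y i ∈ N1 G v ∧ z i ∈ N2 G v) ∧
  (∀ i, x i ≠ z i) ∧
  (∀ i j, i ≠ j → ({x i, y i, z i} ∩ {x j, y j, z j} : Set V) = ∅) ∧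
  (∀ i, HvAdj G v (x i) (y i) ∧ HvAdj G v (y i) (z i) ∧ ¬ HvAdj G v (x i) (z i)) ∧
  (∀ a b : V, HvAdj G v a b →
    ∃ i, (a = x i ∧ b = y i) ∨ (a = y i ∧ b = x i) ∨
         (a = y i ∧ b = z i) ∨ (a = z i ∧ b = y i))

/-- If `u ∈ N1` has degree exactly `1` in `H_v` with unique
neighbour `w`, and `S` is a modulator with `v ∉ S` and `u ∈ S`, then
`(S \ {u}) ∪ {w}` is a modulator of cardinality at most `|S|`. -/
theorem stmt_10 [Fintype V] (G : SimpleGraph V) (v u w : V)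
    (hu : u ∈ N1 G v) (huw : HvAdj G v u w)
    (hdeg : ∀ b : V, HvAdj G v u b → b = w)
    (S : Set V) (hS : IsModulator G S) (hv : v ∉ S) (huS : u ∈ S) :
    IsModulator G ((S \ {u}) ∪ {w}) ∧ ((S \ {u}) ∪ {w}).ncard ≤ S.ncard := by
  have hadj_vu : G.Adj v u := hu
  have hA : ∀ b, G.Adj v b → b ≠ u → ¬ G.Adj u b → b = w := by
    intro b h1 h2 h3
    exact hdeg b (Or.inl ⟨hu, h1, h2.symm, h3⟩)
  have hB : ∀ b, b ≠ v → ¬ G.Adj v b → G.Adj u b → b = w := by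
    intro b h1 h2 h3
    exact hdeg b (Or.inr (Or.inl ⟨hu, ⟨h1, h2, u, hadj_vu, h3⟩, h3⟩))
  have hune_w : u ≠ w := by
    rcases huw with ⟨_, _, h, _⟩ | ⟨_, ⟨_, hn, _⟩, _⟩ | ⟨_, ⟨_, hn, _⟩, _⟩
    · exact h
    · intro he; exact hn (he ▸ hadj_vu)
    · exact fun _ => hn hadj_vu
  have hclass : ∀ b, G.Adj u b → b ≠ w → b = v ∨ G.Adj v b := by
    intro b hub hbw
    by_cases h1 : G.Adj v b
    · exact Or.inr h1
    by_cases h2 : b = v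
    · exact Or.inl h2
    · exact absurd (hB b h2 h1 hub) hbw
  set T : Set V := (S \ {u}) ∪ {w} with hTdef
  have hT : ∀ x, x ∉ T → (x ≠ u → x ∉ S) ∧ x ≠ w := by
    intro x hx
    constructor
    · intro hxu hxS; exact hx (Or.inl ⟨hxS, hxu⟩)
    · intro he; exact hx (Or.inr he)
  constructor
  · intro a b c hP
    obtain ⟨⟨hab, haT, hbT⟩, ⟨hbc, _, hcT⟩, hac, hne⟩ := hP
    have hacG : ¬ G.Adj a c := fun h => hac ⟨h, haT, hcT⟩
    have hend : ∀ b c : V, G.Adj u b → G.Adj b c → ¬ G.Adj u c → u ≠ c →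
        b ∉ T → c ∉ T → False := by
      intro b c hub hbc hnuc huc hbT hcT
      have hbu : b ≠ u := fun h => G.loopless.irrefl u (h ▸ hub)
      have hcu : c ≠ u := Ne.symm huc
      obtain ⟨hbS', hbw⟩ := hT b hbT
      have hbS := hbS' hbu
      obtain ⟨hcS', hcw⟩ := hT c hcT
      have hcS := hcS' hcu
      rcases hclass b hub hbw with hbv | hbN1
      · subst hbv
        exact hcw (hA c hbc hcu hnuc)
      · have hcv : c ≠ v := fun h => hnuc (h ▸ hadj_vu.symm)
        by_cases hvc : G.Adj v c
        · exact hcw (hA c hvc hcu hnuc)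
        · exact hS v b c ⟨⟨hbN1, hv, hbS⟩, ⟨hbc, hbS, hcS⟩,
            fun hh => hvc hh.1, Ne.symm hcv⟩
    by_cases hua : u = a
    · exact hend b c (hua ▸ hab) hbc (fun h => hacG (hua ▸ h)) (hua ▸ hne) hbT hcT
    by_cases huc : u = c
    · exact hend b a (huc ▸ hbc.symm) hab.symm (fun h => hacG (huc ▸ h.symm))
        (fun h => hne (h.symm.trans huc)) hbT haT
    by_cases hub : u = b
    · subst hub
      have hau : a ≠ u := hab.ne
      have hcu : c ≠ u := fun h => huc h.symm
      obtain ⟨haS', haw⟩ := hT a haT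
      have haS := haS' hau
      obtain ⟨hcS', hcw⟩ := hT c hcT
      have hcS := hcS' hcu
      rcases hclass a hab.symm haw with hav | hva
      · rcases hclass c hbc hcw with hcv | hvc
        · exact hne (hav.trans hcv.symm)
        · exact hacG (hav ▸ hvc)
      · rcases hclass c hbc hcw with hcv | hvc
        · exact hacG (hcv ▸ hva.symm)
        · exact hS a v c ⟨⟨hva.symm, haS, hv⟩, ⟨hvc, hv, hcS⟩, fun hh => hacG hh.1, hne⟩
    · obtain ⟨haS', _⟩ := hT a haT
      obtain ⟨hbS', _⟩ := hT b hbT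
      obtain ⟨hcS', _⟩ := hT c hcT
      exact hS a b c ⟨⟨hab, haS' (fun h => hua h.symm), hbS' (fun h => hub h.symm)⟩,
        ⟨hbc, hbS' (fun h => hub h.symm), hcS' (fun h => huc h.symm)⟩,
        fun hh => hacG hh.1, hne⟩
  · have hfin : S.Finite := S.toFinite
    calc ((S \ {u}) ∪ {w}).ncard ≤ (S \ {u}).ncard + ({w} : Set V).ncard :=
          Set.ncard_union_le _ _
      _ = (S \ {u}).ncard + 1 := by rw [Set.ncard_singleton]
      _ = S.ncard := Set.ncard_diff_singleton_add_one huS hfin
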